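/- arXiv:math/0204050 — 4 statements merged into one kernel-verified Lean document; each statement's English description precedes it below -/
import Mathlib

section
/- Let γ : ℝ → ℝⁿ be a C² curve with ‖γ'(s)‖ = 1 and ‖γ''(s)‖ ≤ C for all s, where C > 0. Then for all s ∈ (0, π/(2C)], ‖γ(s) − γ(0)‖ ≥ sin(sC)/C. -/
open Real Set Filter Topology RealInnerProductSpace

/-- Auxiliary comparison: with a strictly larger slope `C + ε` and a shifted phase `ε`,
a function with `f 0 = 1` and `|f'| ≤ C √(1 - f²)` stays above `cos (ε + (C+ε) t)`. -/
lemma comparison_cos_aux {C ε : ℝ} (hC : 0 < C) (hε : 0 < ε) {f f' : ℝ → ℝ}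
    (hf : ∀ t, HasDerivAt f (f' t) t) (hf0 : f 0 = 1)
    (hbound : ∀ t, |f' t| ≤ C * Real.sqrt (1 - f t ^ 2))
    {s : ℝ} (hs : 0 < s) (hπ : ε + (C + ε) * s < Real.pi) :
    ∀ t ∈ Icc (0:ℝ) s, Real.cos (ε + (C + ε) * t) ≤ f t := by
  set K := C + ε with hK
  have hKpos : 0 < K := by positivity
  by_contra hcon
  push_neg at hcon
  obtain ⟨t₁, ht₁, ht₁lt⟩ := hcon
  set h : ℝ → ℝ := fun r => f r - Real.cos (ε + K * r) with hh_def
  have hfc : Continuous f := by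
    apply continuous_iff_continuousAt.2 (fun t => (hf t).continuousAt)
  have hhc : Continuous h := by
    apply hfc.sub
    exact Real.continuous_cos.comp (continuous_const.add (continuous_const.mul continuous_id))
  have hh : ∀ r, HasDerivAt h (f' r + K * Real.sin (ε + K * r)) r := by
    intro r
    have h1 : HasDerivAt (fun r : ℝ => ε + K * r) K r := by
      simpa using (hasDerivAt_id r).const_mul K |>.const_add ε
    have h2 : HasDerivAt (fun r : ℝ => Real.cos (ε + K * r))
        (-Real.sin (ε + K * r) * K) r := (Real.hasDerivAt_cos _).comp r h1
    have := (hf r).sub h2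
    exact this.congr_deriv (by ring)
  set S : Set ℝ := {r | r ∈ Icc (0:ℝ) s ∧ h r < 0} with hS_def
  have hne : S.Nonempty := ⟨t₁, ht₁, by simpa [hh_def] using sub_neg.2 ht₁lt⟩
  have hbdd : BddBelow S := ⟨0, fun r hr => hr.1.1⟩
  set t₀ := sInf S with ht₀_def
  have hclosed : IsClosed {r : ℝ | r ∈ Icc (0:ℝ) s ∧ h r ≤ 0} :=
    (isClosed_Icc).inter (isClosed_le hhc continuous_const)
  have ht₀cl : t₀ ∈ {r : ℝ | r ∈ Icc (0:ℝ) s ∧ h r ≤ 0} := by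
    have h1 : t₀ ∈ closure S := csInf_mem_closure hne hbdd
    have h2 : closure S ⊆ {r : ℝ | r ∈ Icc (0:ℝ) s ∧ h r ≤ 0} := by
      apply closure_minimal _ hclosed
      exact fun r hr => ⟨hr.1, hr.2.le⟩
    exact h2 h1
  obtain ⟨ht₀mem, ht₀le⟩ := ht₀cl
  have hεπ : ε < Real.pi := by nlinarith
  have h0pos : 0 < h 0 := by
    have : Real.cos ε < 1 := by
      have := Real.cos_lt_cos_of_nonneg_of_le_pi (le_refl 0) hεπ.le hε
      simpa using this
    simp [hh_def, hf0]
    linarith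
  have ht₀pos : 0 < t₀ := by
    rcases lt_or_eq_of_le ht₀mem.1 with h' | h'
    · exact h'
    · exfalso; rw [← h'] at ht₀le; linarith
  -- h t₀ ≥ 0 by taking limits from the left
  have hge : 0 ≤ h t₀ := by
    have hev : ∀ᶠ r in 𝓝[<] t₀, 0 ≤ h r := by
      filter_upwards [Ioo_mem_nhdsLT_of_mem (⟨ht₀pos, le_refl _⟩ : t₀ ∈ Ioc 0 t₀)]
        with r hr
      by_contra hneg
      push_neg at hneg
      have hrS : r ∈ S := ⟨⟨hr.1.le, hr.2.le.trans ht₀mem.2⟩, hneg⟩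
      exact absurd (csInf_le hbdd hrS) (not_le.2 hr.2)
    exact ge_of_tendsto ((hhc.tendsto t₀).mono_left nhdsWithin_le_nhds) hev
  have heq : h t₀ = 0 := le_antisymm ht₀le hge
  have ht₀lt : t₀ < s := by
    rcases lt_or_eq_of_le ht₀mem.2 with h' | h'
    · exact h'
    · exfalso
      obtain ⟨r, hrS⟩ := hne
      have hr_eq : r = t₀ := le_antisymm (by rw [h']; exact hrS.1.2) (csInf_le hbdd hrS)
      have hlt := hrS.2
      rw [hr_eq, heq] at hlt
      exact lt_irrefl 0 hlt
  -- points of S accumulate at t₀ from the right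
  have hfreq : ∃ᶠ r in 𝓝[>] t₀, h r < 0 := by
    rw [frequently_iff]
    intro U hU
    obtain ⟨u, hu, hsub⟩ := mem_nhdsGT_iff_exists_Ioo_subset.1 hU
    have hmin : t₀ < min u s := lt_min hu ht₀lt
    obtain ⟨r, hrS, hrlt⟩ := exists_lt_of_csInf_lt hne hmin
    have hrt₀ : t₀ < r := by
      refine lt_of_le_of_ne (csInf_le hbdd hrS) (fun h' => ?_)
      have hlt := hrS.2
      rw [← h', heq] at hlt
      exact lt_irrefl 0 hlt
    exact ⟨r, hsub ⟨hrt₀, hrlt.trans_le (min_le_left _ _)⟩, hrS.2⟩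
  -- hence the one-sided derivative of h at t₀ is ≤ 0
  set D := f' t₀ + K * Real.sin (ε + K * t₀) with hD_def
  have hDle : D ≤ 0 := by
    by_contra hDpos
    push_neg at hDpos
    have htend : Tendsto (slope h t₀) (𝓝[>] t₀) (𝓝 D) := by
      have := ((hh t₀).hasDerivWithinAt (s := Ioi t₀))
      rw [hasDerivWithinAt_iff_tendsto_slope] at this
      simpa [Set.diff_singleton_eq_self (fun hmem => lt_irrefl t₀ hmem)] using this
    have hev : ∀ᶠ r in 𝓝[>] t₀, 0 < slope h t₀ r := htend.eventually (eventually_gt_nhds hDpos)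
    have hev2 : ∀ᶠ r in 𝓝[>] t₀, t₀ < r ∧ 0 < slope h t₀ r :=
      (eventually_mem_nhdsWithin.mono fun r hr => mem_Ioi.1 hr).and hev
    obtain ⟨r, hr1, hr2, hr3⟩ := (hfreq.and_eventually hev2).exists
    have : slope h t₀ r < 0 := by
      rw [slope_def_field, heq, sub_zero]
      exact div_neg_of_neg_of_pos hr1 (by linarith)
    linarith
  -- the differential inequality gives a lower bound on f' t₀
  have hft₀ : f t₀ = Real.cos (ε + K * t₀) := by
    have := heq; simp [hh_def] at this; linarith
  have hargmem : 0 ≤ ε + K * t₀ ∧ ε + K * t₀ ≤ Real.pi := by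
    constructor
    · positivity
    · nlinarith [ht₀lt, hKpos]
  have hsin_eq : Real.sqrt (1 - f t₀ ^ 2) = Real.sin (ε + K * t₀) := by
    rw [hft₀, ← Real.sin_eq_sqrt_one_sub_cos_sq hargmem.1 hargmem.2]
  have hlow : -(C * Real.sin (ε + K * t₀)) ≤ f' t₀ := by
    have := hbound t₀
    rw [hsin_eq] at this
    exact (abs_le.1 this).1
  have hsinpos : 0 < Real.sin (ε + K * t₀) := by
    apply Real.sin_pos_of_pos_of_lt_pi (by positivity)
    nlinarith [ht₀lt, hKpos]
  nlinarith [hDle, hlow, hsinpos, hε]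

/-- Comparison lemma: if `f 0 = 1` and `|f'| ≤ C √(1 - f²)`, then `cos (C t) ≤ f t`
on `[0, s]` provided `s C ≤ π/2`. -/
lemma comparison_cos {C : ℝ} (hC : 0 < C) {f f' : ℝ → ℝ}
    (hf : ∀ t, HasDerivAt f (f' t) t) (hf0 : f 0 = 1)
    (hbound : ∀ t, |f' t| ≤ C * Real.sqrt (1 - f t ^ 2))
    {s : ℝ} (hs : 0 < s) (hsC : s * C ≤ Real.pi / 2) :
    ∀ t ∈ Icc (0:ℝ) s, Real.cos (C * t) ≤ f t := by
  intro t ht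
  have hδ : 0 < (Real.pi - C * s) / (1 + s) := by
    apply div_pos
    · nlinarith [Real.pi_pos]
    · linarith
  have htend : Tendsto (fun ε : ℝ => Real.cos (ε + (C + ε) * t)) (𝓝[>] 0)
      (𝓝 (Real.cos (C * t))) := by
    have hc : Continuous (fun ε : ℝ => Real.cos (ε + (C + ε) * t)) := by
      apply Real.continuous_cos.comp
      exact continuous_id.add ((continuous_const.add continuous_id).mul continuous_const)
    have := (hc.tendsto 0).mono_left (nhdsWithin_le_nhds (s := Ioi (0:ℝ)))
    simpa using this
  have hev : ∀ᶠ ε in 𝓝[>] (0:ℝ), Real.cos (ε + (C + ε) * t) ≤ f t := by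
    filter_upwards [Ioo_mem_nhdsGT_of_mem (⟨le_refl _, hδ⟩ : (0:ℝ) ∈ Ico 0 _)]
      with ε hε
    have hπ : ε + (C + ε) * s < Real.pi := by
      have h1 : ε * (1 + s) < Real.pi - C * s := by
        calc ε * (1 + s) < (Real.pi - C * s) / (1 + s) * (1 + s) := by
              apply mul_lt_mul_of_pos_right hε.2 (by linarith)
          _ = Real.pi - C * s := by field_simp
      nlinarith
    exact comparison_cos_aux hC hε.1 hf hf0 hbound hs hπ t ht
  exact le_of_tendsto htend hev

/-- **Schur-type chord bound.** If `γ : ℝ → ℝⁿ` is a `C²` unit-speed curve with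
`‖γ''(s)‖ ≤ C` everywhere, then for `0 < s ≤ π/(2C)` one has
`‖γ(s) - γ(0)‖ ≥ sin (s C) / C`. -/
theorem chord_length_lower_bound {n : ℕ} (C : ℝ) (hC : 0 < C)
    (γ : ℝ → EuclideanSpace ℝ (Fin n))
    (hγ : ContDiff ℝ 2 γ)
    (hunit : ∀ s : ℝ, ‖deriv γ s‖ = 1)
    (hcurv : ∀ s : ℝ, ‖deriv (deriv γ) s‖ ≤ C) :
    ∀ s : ℝ, 0 < s → s ≤ Real.pi / (2 * C) →
      Real.sin (s * C) / C ≤ ‖γ s - γ 0‖ := by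
  intro s hs hsπ
  have hsC : s * C ≤ Real.pi / 2 := by
    rw [le_div_iff₀ (by positivity)] at hsπ
    linarith
  -- regularity
  have h2 : ContDiff ℝ (1 + 1 : ℕ) γ := by exact_mod_cast hγ
  rw [show ((1 + 1 : ℕ) : WithTop ℕ∞) = (1 : WithTop ℕ∞) + 1 by norm_cast] at h2
  rw [contDiff_succ_iff_deriv] at h2
  obtain ⟨hγdiff, -, hT1⟩ := h2
  have hTdiff : Differentiable ℝ (deriv γ) := (contDiff_one_iff_deriv.1 hT1).1
  have hTcont : Continuous (deriv γ) := hT1.continuous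
  set T := deriv γ with hT_def
  set N := deriv T with hN_def
  have hT' : ∀ t, HasDerivAt T (N t) t := fun t => (hTdiff t).hasDerivAt
  set v := T 0 with hv_def
  have hv1 : ‖v‖ = 1 := hunit 0
  set f : ℝ → ℝ := fun t => ⟪T t, v⟫ with hf_def
  set f' : ℝ → ℝ := fun t => ⟪N t, v⟫ with hf'_def
  have hf : ∀ t, HasDerivAt f (f' t) t := by
    intro t
    have := HasDerivAt.inner ℝ (hT' t) (hasDerivAt_const t v)
    simpa [hf_def, hf'_def] using this
  have hf0 : f 0 = 1 := by
    simp only [hf_def, hv_def]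
    rw [real_inner_self_eq_norm_sq, hunit 0]
    norm_num
  -- T has constant norm 1, so N ⟂ T
  have horth : ∀ t, ⟪N t, T t⟫ = 0 := by
    intro t
    have hg : ∀ r, HasDerivAt (fun r => ⟪T r, T r⟫) (⟪T r, N r⟫ + ⟪N r, T r⟫) r :=
      fun r => HasDerivAt.inner ℝ (hT' r) (hT' r)
    have hgconst : ∀ r, ⟪T r, T r⟫ = (1:ℝ) := by
      intro r
      rw [real_inner_self_eq_norm_sq, hunit r]; norm_num
    have hg0 : HasDerivAt (fun r => ⟪T r, T r⟫) 0 t := by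
      have : (fun r => ⟪T r, T r⟫) = fun _ => (1:ℝ) := funext hgconst
      rw [this]; exact hasDerivAt_const t 1
    have huniq : ⟪T t, N t⟫ + ⟪N t, T t⟫ = 0 := (hg t).unique hg0
    have hsymm : ⟪T t, N t⟫ = ⟪N t, T t⟫ := real_inner_comm _ _
    linarith
  -- the differential inequality
  have hbound : ∀ t, |f' t| ≤ C * Real.sqrt (1 - f t ^ 2) := by
    intro t
    have hkey : f' t = ⟪N t, v - f t • T t⟫ := by
      rw [inner_sub_right, real_inner_smul_right, horth t, mul_zero, sub_zero]
    have hnorm : ‖v - f t • T t‖ = Real.sqrt (1 - f t ^ 2) := by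
      have hvT : ⟪v, T t⟫ = f t := (real_inner_comm v (T t)).symm
      have hsq : ‖v - f t • T t‖ ^ 2 = 1 - f t ^ 2 := by
        rw [norm_sub_sq_real, real_inner_smul_right, norm_smul, hv1, hunit t, hvT,
          Real.norm_eq_abs, mul_one, sq_abs]
        ring
      rw [← hsq, Real.sqrt_sq (norm_nonneg _)]
    calc |f' t| = |⟪N t, v - f t • T t⟫| := by rw [hkey]
      _ ≤ ‖N t‖ * ‖v - f t • T t‖ := abs_real_inner_le_norm _ _
      _ ≤ C * Real.sqrt (1 - f t ^ 2) := by
          rw [hnorm]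
          exact mul_le_mul_of_nonneg_right (hcurv t) (Real.sqrt_nonneg _)
  have hcos : ∀ t ∈ Icc (0:ℝ) s, Real.cos (C * t) ≤ f t :=
    comparison_cos hC hf hf0 hbound hs hsC
  -- integrate
  have hfcont : Continuous f := (hTcont.inner continuous_const)
  have hTint : IntervalIntegrable T MeasureTheory.volume 0 s := hTcont.intervalIntegrable 0 s
  have hFTC : ∫ t in (0:ℝ)..s, T t = γ s - γ 0 :=
    intervalIntegral.integral_deriv_eq_sub (fun x _ => hγdiff x) hTint
  have hinner : ∫ t in (0:ℝ)..s, f t = ⟪v, γ s - γ 0⟫ := by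
    have hL := (innerSL ℝ v).intervalIntegral_comp_comm hTint
    have : ∫ t in (0:ℝ)..s, f t = ∫ t in (0:ℝ)..s, (innerSL ℝ v) (T t) := by
      apply intervalIntegral.integral_congr
      intro t _
      exact real_inner_comm v (T t)
    rw [this, hL, hFTC]
    rfl
  have hcosint : ∫ t in (0:ℝ)..s, Real.cos (C * t) = Real.sin (s * C) / C := by
    have h1 : ∫ t in (0:ℝ)..s, Real.cos (t * C) =
        C⁻¹ • ∫ x in (0*C)..(s*C), Real.cos x :=
      intervalIntegral.integral_comp_mul_right Real.cos (ne_of_gt hC)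
    have h2 : (∫ t in (0:ℝ)..s, Real.cos (C * t)) = ∫ t in (0:ℝ)..s, Real.cos (t * C) := by
      apply intervalIntegral.integral_congr
      intro t _
      simp [mul_comm]
    rw [h2, h1, integral_cos]
    simp [smul_eq_mul, div_eq_inv_mul]
  have hmono : ∫ t in (0:ℝ)..s, Real.cos (C * t) ≤ ∫ t in (0:ℝ)..s, f t := by
    apply intervalIntegral.integral_mono_on hs.le
    · exact (Real.continuous_cos.comp (continuous_const.mul continuous_id)).intervalIntegrable 0 s
    · exact hfcont.intervalIntegrable 0 s
    · exact hcos
  have hCS : ⟪v, γ s - γ 0⟫ ≤ ‖γ s - γ 0‖ := by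
    calc ⟪v, γ s - γ 0⟫ ≤ ‖v‖ * ‖γ s - γ 0‖ := real_inner_le_norm _ _
      _ = ‖γ s - γ 0‖ := by rw [hv1, one_mul]
  calc Real.sin (s * C) / C = ∫ t in (0:ℝ)..s, Real.cos (C * t) := hcosint.symm
    _ ≤ ∫ t in (0:ℝ)..s, f t := hmono
    _ = ⟪v, γ s - γ 0⟫ := hinner
    _ ≤ ‖γ s - γ 0‖ := hCS
end

section
/- Let f : ℝᵏ → ℝᵐ be C^{1,1}, p ∈ ℝᵏ, v ∈ ℝᵏ and w ∈ ℝᵐ unit vectors such that f_vv(p) exists, and R > 0. Set I = (1 + ‖f_v(p)‖²)·√(1 + ‖∇(f·w)(p)‖²) and n = (−∇(f·w)(p), w)/√(1 + ‖∇(f·w)(p)‖²). If f_vv(p)·w > I/R, then the ball B((p,f(p)) + R·n, R) intersects the graph G of f; in fact there exist arbitrarily small t ≠ 0 with (p+tv, f(p+tv)) ∈ B((p,f(p)) + R·n, R). -/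
open scoped RealInnerProductSpace

/-- The pair `(x, y)` regarded as a point of Euclidean `ℝ^{k+m}` (the `ℓ²` product). -/
noncomputable def pairE {k m : ℕ} (x : EuclideanSpace ℝ (Fin k))
    (y : EuclideanSpace ℝ (Fin m)) :
    WithLp 2 (EuclideanSpace ℝ (Fin k) × EuclideanSpace ℝ (Fin m)) :=
  (WithLp.equiv 2 _).symm (x, y)

/-- The gradient of `x ↦ ⟪f x, w⟫` at `p`. -/
noncomputable def gradW {k m : ℕ} (f : EuclideanSpace ℝ (Fin k) → EuclideanSpace ℝ (Fin m))
    (w : EuclideanSpace ℝ (Fin m)) (p : EuclideanSpace ℝ (Fin k)) :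
    EuclideanSpace ℝ (Fin k) :=
  gradient (fun x => ⟪f x, w⟫) p

/-- The unit normal `n = (−∇(f·w)(p), w)/√(1 + ‖∇(f·w)(p)‖²)` to the graph of `f`
at `(p, f(p))` determined by `w`. -/
noncomputable def graphNormal {k m : ℕ}
    (f : EuclideanSpace ℝ (Fin k) → EuclideanSpace ℝ (Fin m))
    (w : EuclideanSpace ℝ (Fin m)) (p : EuclideanSpace ℝ (Fin k)) :
    WithLp 2 (EuclideanSpace ℝ (Fin k) × EuclideanSpace ℝ (Fin m)) :=
  (Real.sqrt (1 + ‖gradW f w p‖ ^ 2))⁻¹ • pairE (-(gradW f w p)) w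

/-- The graph of `f` as a subset of Euclidean `ℝ^{k+m}`. -/
def graphSet {k m : ℕ} (f : EuclideanSpace ℝ (Fin k) → EuclideanSpace ℝ (Fin m)) :
    Set (WithLp 2 (EuclideanSpace ℝ (Fin k) × EuclideanSpace ℝ (Fin m))) :=
  {z | ∃ x, z = pairE x (f x)}

set_option maxHeartbeats 1000000 in
/-- **Lemma 3, converse direction.** If `f : ℝᵏ → ℝᵐ` is `C^{1,1}`, `v, w` are unit
vectors, `f_vv(p)` exists and `f_vv(p)·w > I/R` where
`I = (1 + ‖f_v(p)‖²)√(1 + ‖∇(f·w)(p)‖²)`, then the tangent ball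
`B((p,f(p)) + R·n, R)` meets the graph of `f`: indeed there are arbitrarily small
`t ≠ 0` with `(p + tv, f(p + tv))` in this ball. -/
theorem tangent_ball_meets_graph_of_large_secondDeriv {k m : ℕ}
    (f : EuclideanSpace ℝ (Fin k) → EuclideanSpace ℝ (Fin m))
    (hf : ContDiff ℝ 1 f) (L : NNReal) (hlip : LipschitzWith L (fderiv ℝ f))
    (p v : EuclideanSpace ℝ (Fin k)) (w : EuclideanSpace ℝ (Fin m))
    (hv : ‖v‖ = 1) (hw : ‖w‖ = 1)
    (fvv : EuclideanSpace ℝ (Fin m))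
    (hfvv : HasDerivAt (fun t : ℝ => fderiv ℝ f (p + t • v) v) fvv 0)
    (R : ℝ) (hR : 0 < R)
    (hbig : (1 + ‖fderiv ℝ f p v‖ ^ 2) * Real.sqrt (1 + ‖gradW f w p‖ ^ 2) / R
      < ⟪fvv, w⟫) :
    ∀ δ > (0 : ℝ), ∃ t : ℝ, t ≠ 0 ∧ |t| < δ ∧
      pairE (p + t • v) (f (p + t • v)) ∈
        Metric.ball (pairE p (f p) + R • graphNormal f w p) R := by
  have hdf := hf.differentiable one_ne_zero
  set g := fderiv ℝ f p v with hgdef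
  set G := gradW f w p with hGdef
  set s := Real.sqrt (1 + ‖G‖ ^ 2) with hsdef
  have h1G : (0:ℝ) < 1 + ‖G‖ ^ 2 := by positivity
  have hs : 0 < s := Real.sqrt_pos.2 h1G
  have hs2 : s ^ 2 = 1 + ‖G‖ ^ 2 := Real.sq_sqrt h1G.le
  -- the line through p with direction v
  have hline : ∀ t : ℝ, HasDerivAt (fun t : ℝ => p + t • v) v t := fun t => by
    simpa using ((hasDerivAt_id t).smul_const v).const_add p
  have hg : ∀ t : ℝ, HasDerivAt (fun t : ℝ => f (p + t • v)) (fderiv ℝ f (p + t • v) v) t :=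
    fun t => (hdf (p + t • v)).hasFDerivAt.comp_hasDerivAt t (hline t)
  have hp0 : p + (0:ℝ) • v = p := by simp
  -- gradient identity : ⟪G, v⟫ = ⟪g, w⟫
  have hGv : ⟪G, v⟫ = ⟪g, w⟫ := by
    have hfw : ∀ t : ℝ, HasDerivAt (fun t : ℝ => ⟪f (p + t • v), w⟫)
        (⟪fderiv ℝ f (p + t • v) v, w⟫) t := by
      intro t
      simpa using (hg t).inner ℝ (hasDerivAt_const t w)
    have hFD : HasFDerivAt (fun x => ⟪f x, w⟫)
        ((fderivInnerCLM ℝ (f p, w)).comp ((fderiv ℝ f p).prod 0)) p :=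
      (hdf p).hasFDerivAt.inner ℝ (hasFDerivAt_const w p)
    have : G = (InnerProductSpace.toDual ℝ _).symm (fderiv ℝ (fun x => ⟪f x, w⟫) p) := rfl
    rw [this, InnerProductSpace.toDual_symm_apply, hFD.fderiv]
    simp [real_inner_comm, hgdef]
  set a : ℝ := ⟪g, w⟫ with hadef
  set c₂ : ℝ := ⟪fvv, w⟫ with hc2def
  set Δ : ℝ → EuclideanSpace ℝ (Fin m) := fun t => f (p + t • v) - f p with hΔdef
  set N : ℝ → ℝ := fun t => ⟪Δ t, w⟫ - t * a with hNdef
  -- ψ t is the deficit ‖X t - c‖² - R²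
  set ψ : ℝ → ℝ := fun t => t ^ 2 + ‖Δ t‖ ^ 2 - 2 * R * s⁻¹ * N t with hψdef
  -- norm computation
  have hnorm : ∀ t : ℝ, ‖pairE (p + t • v) (f (p + t • v)) -
      (pairE p (f p) + R • graphNormal f w p)‖ ^ 2 = R ^ 2 + ψ t := by
    intro t
    have hsub : pairE (p + t • v) (f (p + t • v)) - (pairE p (f p) + R • graphNormal f w p)
        = pairE (t • v) (Δ t) - R • graphNormal f w p := by
      have : pairE (p + t • v) (f (p + t • v)) - pairE p (f p) = pairE (t • v) (Δ t) := by
        have : (p + t • v) - p = t • v := by abel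
        simp only [hΔdef]
        exact congrArg₂ pairE this rfl ▸ rfl
      rw [sub_add_eq_sub_sub, this]
    rw [hsub, norm_sub_sq_real]
    have hA : ‖pairE (t • v) (Δ t)‖ ^ 2 = t ^ 2 + ‖Δ t‖ ^ 2 := by
      rw [← real_inner_self_eq_norm_sq]
      have : ⟪pairE (t • v) (Δ t), pairE (t • v) (Δ t)⟫ = ⟪t • v, t • v⟫ + ⟪Δ t, Δ t⟫ := rfl
      rw [this, real_inner_self_eq_norm_sq, real_inner_self_eq_norm_sq, norm_smul]
      simp [hv, mul_pow, abs_sq, sq_abs]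
    have hB : ⟪pairE (t • v) (Δ t), R • graphNormal f w p⟫ = R * s⁻¹ * (-(t * a) + ⟪Δ t, w⟫) := by
      rw [real_inner_smul_right]
      have : graphNormal f w p = s⁻¹ • pairE (-G) w := rfl
      rw [this, real_inner_smul_right]
      have : ⟪pairE (t • v) (Δ t), pairE (-G) w⟫ = ⟪t • v, -G⟫ + ⟪Δ t, w⟫ := rfl
      have hva : ⟪v, G⟫ = a := by rw [real_inner_comm]; exact hGv
      rw [this, inner_neg_right, real_inner_smul_left, hva]
      ring
    have hC : ‖R • graphNormal f w p‖ ^ 2 = R ^ 2 := by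
      rw [norm_smul]
      have : graphNormal f w p = s⁻¹ • pairE (-G) w := rfl
      rw [this, norm_smul]
      have hn2 : ‖pairE (-G) w‖ ^ 2 = ‖G‖ ^ 2 + 1 := by
        rw [← real_inner_self_eq_norm_sq]
        have : ⟪pairE (-G) w, pairE (-G) w⟫ = ⟪-G, -G⟫ + ⟪w, w⟫ := rfl
        rw [this, real_inner_self_eq_norm_sq, real_inner_self_eq_norm_sq]
        simp [hw]
      have h1 : ‖pairE (-G) w‖ = s := by
        rw [show s = Real.sqrt (‖G‖^2 + 1) by rw [hsdef]; ring_nf]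
        rw [← hn2, Real.sqrt_sq (norm_nonneg _)]
      rw [h1, Real.norm_eq_abs, Real.norm_eq_abs, abs_of_pos (inv_pos.2 hs), abs_of_pos hR]
      field_simp
    rw [hA, hB, hC, hψdef, hNdef]
    ring
  -- slope limit for Δ
  have hslope : Filter.Tendsto (fun t : ℝ => t⁻¹ • Δ t) (nhdsWithin 0 {(0:ℝ)}ᶜ) (nhds g) := by
    have h0 : HasDerivAt (fun t : ℝ => f (p + t • v)) g 0 := by
      have := hg 0
      rwa [hp0] at this
    have := hasDerivAt_iff_tendsto_slope.1 h0
    refine this.congr' ?_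
    filter_upwards [eventually_mem_nhdsWithin] with t ht
    simp [slope, hΔdef, hp0]
  -- l'Hopital limit for N / t²
  have hlh : Filter.Tendsto (fun t : ℝ => N t / t ^ 2) (nhdsWithin 0 {(0:ℝ)}ᶜ)
      (nhds (c₂ / 2)) := by
    have hN' : ∀ t : ℝ, HasDerivAt N (⟪fderiv ℝ f (p + t • v) v, w⟫ - a) t := by
      intro t
      have h1 : HasDerivAt (fun t : ℝ => ⟪f (p + t • v), w⟫)
          (⟪fderiv ℝ f (p + t • v) v, w⟫) t := by
        simpa using (hg t).inner ℝ (hasDerivAt_const t w)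
      have h2 : HasDerivAt (fun t : ℝ => ⟪Δ t, w⟫) (⟪fderiv ℝ f (p + t • v) v, w⟫) t := by
        simp only [hΔdef, inner_sub_left]
        exact h1.sub_const _
      exact h2.sub (hasDerivAt_mul_const a)
    have hg' : ∀ t : ℝ, HasDerivAt (fun t : ℝ => t ^ 2) (2 * t) t := by
      intro t; simpa using hasDerivAt_pow 2 t
    have hdiv : Filter.Tendsto (fun t : ℝ => (⟪fderiv ℝ f (p + t • v) v, w⟫ - a) / (2 * t))
        (nhdsWithin 0 {(0:ℝ)}ᶜ) (nhds (c₂ / 2)) := by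
      have hiw : HasDerivAt (fun t : ℝ => ⟪fderiv ℝ f (p + t • v) v, w⟫) c₂ 0 := by
        simpa [hc2def] using hfvv.inner ℝ (hasDerivAt_const 0 w)
      have hsl := hasDerivAt_iff_tendsto_slope.1 hiw
      have heq : ∀ t : ℝ, (⟪fderiv ℝ f (p + t • v) v, w⟫ - a) / (2 * t)
          = 2⁻¹ * slope (fun t : ℝ => ⟪fderiv ℝ f (p + t • v) v, w⟫) 0 t := by
        intro t
        simp only [slope, vsub_eq_sub, hp0, ← hadef, smul_eq_mul, sub_zero]
        field_simp
        rfl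
      simp only [heq]
      have h := hsl.const_mul (2⁻¹ : ℝ)
      rw [show (2⁻¹:ℝ) * c₂ = c₂ / 2 by ring] at h
      exact h
    refine HasDerivAt.lhopital_zero_nhdsNE ?_ ?_ ?_ ?_ ?_ hdiv
    · exact Filter.Eventually.of_forall fun t => hN' t
    · exact Filter.Eventually.of_forall fun t => hg' t
    · filter_upwards [eventually_mem_nhdsWithin] with t ht
      simpa using ht
    · have hN0 : N 0 = 0 := by simp [hNdef, hΔdef, hp0]
      have h := (hN' 0).continuousAt.tendsto
      rw [hN0] at h
      exact h.mono_left nhdsWithin_le_nhds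
    · have h : Filter.Tendsto (fun t : ℝ => t ^ 2) (nhds 0) (nhds 0) := by
        simpa using (continuous_pow 2).tendsto (0:ℝ)
      exact h.mono_left nhdsWithin_le_nhds
  -- combined limit
  set A : ℝ := 1 + ‖g‖ ^ 2 - 2 * R * s⁻¹ * (c₂ / 2) with hAdef
  have hAneg : A < 0 := by
    have h1 : (1 + ‖g‖ ^ 2) * s < c₂ * R := by
      rw [div_lt_iff₀ hR] at hbig
      exact hbig
    have hexpr : A = ((1 + ‖g‖ ^ 2) * s - R * c₂) * s⁻¹ := by
      rw [hAdef]; field_simp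
    have h1' : (1 + ‖g‖ ^ 2) * s - R * c₂ < 0 := by
      rw [mul_comm R c₂]; linarith
    rw [hexpr]
    exact mul_neg_of_neg_of_pos h1' (inv_pos.2 hs)
  have hcomb : Filter.Tendsto (fun t : ℝ => 1 + ‖t⁻¹ • Δ t‖ ^ 2 - 2 * R * s⁻¹ * (N t / t ^ 2))
      (nhdsWithin 0 {(0:ℝ)}ᶜ) (nhds A) := by
    rw [hAdef]
    have h1 : Filter.Tendsto (fun t : ℝ => ‖t⁻¹ • Δ t‖ ^ 2) (nhdsWithin 0 {(0:ℝ)}ᶜ)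
        (nhds (‖g‖ ^ 2)) := hslope.norm.pow 2
    exact (Filter.Tendsto.const_add 1 h1).sub ((hlh.const_mul _))
  -- eventually ψ t < 0
  have hev : ∀ᶠ t in nhdsWithin (0:ℝ) {(0:ℝ)}ᶜ, ψ t < 0 := by
    have hlt : ∀ᶠ t in nhdsWithin (0:ℝ) {(0:ℝ)}ᶜ,
        1 + ‖t⁻¹ • Δ t‖ ^ 2 - 2 * R * s⁻¹ * (N t / t ^ 2) < 0 :=
      hcomb.eventually_lt_const hAneg
    filter_upwards [hlt, eventually_mem_nhdsWithin] with t ht ht0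
    have ht0' : t ≠ 0 := ht0
    have hψeq : ψ t = t ^ 2 * (1 + ‖t⁻¹ • Δ t‖ ^ 2 - 2 * R * s⁻¹ * (N t / t ^ 2)) := by
      rw [hψdef]
      have h2 : ‖t⁻¹ • Δ t‖ ^ 2 = t⁻¹ ^ 2 * ‖Δ t‖ ^ 2 := by
        rw [norm_smul]; simp [mul_pow, sq_abs]
      rw [h2]
      field_simp
    rw [hψeq]
    exact mul_neg_of_pos_of_neg (by positivity) ht
  -- conclude
  intro δ hδ
  have hδev : ∀ᶠ t in nhdsWithin (0:ℝ) {(0:ℝ)}ᶜ, |t| < δ := by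
    have : ∀ᶠ t in nhds (0:ℝ), |t| < δ := by
      filter_upwards [Metric.ball_mem_nhds (0:ℝ) hδ] with t ht
      simpa [Real.dist_eq] using ht
    exact this.filter_mono nhdsWithin_le_nhds
  obtain ⟨t, htψ, ht0, htδ⟩ := (hev.and (eventually_mem_nhdsWithin.and hδev)).exists
  refine ⟨t, ht0, htδ, ?_⟩
  rw [Metric.mem_ball, dist_eq_norm]
  have hlt2 : ‖pairE (p + t • v) (f (p + t • v)) -
      (pairE p (f p) + R • graphNormal f w p)‖ ^ 2 < R ^ 2 := by
    rw [hnorm t]; linarith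
  exact lt_of_pow_lt_pow_left₀ 2 hR.le hlt2
end

section
/- Let γ : I → ℝⁿ with I = (−π/(2κ), π/(2κ)) be a Lipschitz-differentiable unit-speed curve (‖γ'‖ ≡ 1) with ‖γ''(s)‖ ≤ κ almost everywhere, where κ > 0. Then the image of γ is disjoint from O_{γ(0)}(γ'(0), 1/κ) := ⋃_{w ⊥ γ'(0), ‖w‖=1} B(γ(0) + (1/κ)·w, 1/κ), the union of open balls of radius 1/κ tangent to the line through γ(0) with direction γ'(0). -/
set_option maxHeartbeats 1000000

open scoped RealInnerProductSpace

open MeasureTheory intervalIntegral Set Filter Real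
open scoped Topology

/-- Spherical cosine triangle inequality for unit vectors. -/
lemma cosTriangle {E : Type*} [NormedAddCommGroup E] [InnerProductSpace ℝ E]
    {x y z : E} (hx : ‖x‖ = 1) (hy : ‖y‖ = 1) (hz : ‖z‖ = 1)
    {α β : ℝ} (hα0 : 0 ≤ α) (hα : α ≤ π/2) (hβ0 : 0 ≤ β) (hβ : β ≤ π/2)
    (h1 : Real.cos α ≤ ⟪x, y⟫) (h2 : Real.cos β ≤ ⟪y, z⟫) :
    Real.cos (α + β) ≤ ⟪x, z⟫ := by
  have hyy : ⟪y, y⟫ = (1:ℝ) := by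
    rw [real_inner_self_eq_norm_sq, hy]; norm_num
  have hpq : ⟪x - (⟪x,y⟫:ℝ) • y, z - (⟪y,z⟫:ℝ) • y⟫ = ⟪x,z⟫ - ⟪x,y⟫ * ⟪y,z⟫ := by
    simp only [inner_sub_left, inner_sub_right, real_inner_smul_left,
      real_inner_smul_right, hyy]
    ring
  have hnp : ‖x - (⟪x,y⟫:ℝ) • y‖^2 = 1 - ⟪x,y⟫^2 := by
    rw [norm_sub_sq_real, real_inner_smul_right, norm_smul, hx, hy,
      Real.norm_eq_abs, mul_one, sq_abs]
    ring
  have hnq : ‖z - (⟪y,z⟫:ℝ) • y‖^2 = 1 - ⟪y,z⟫^2 := by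
    rw [norm_sub_sq_real, real_inner_smul_right, norm_smul, hz, hy,
      Real.norm_eq_abs, mul_one, sq_abs, real_inner_comm z y]
    ring
  have hca : 0 ≤ Real.cos α := Real.cos_nonneg_of_mem_Icc ⟨by linarith [Real.pi_pos], hα⟩
  have hcb : 0 ≤ Real.cos β := Real.cos_nonneg_of_mem_Icc ⟨by linarith [Real.pi_pos], hβ⟩
  have hsa : 0 ≤ Real.sin α := Real.sin_nonneg_of_nonneg_of_le_pi hα0 (by linarith [Real.pi_pos])
  have hsb : 0 ≤ Real.sin β := Real.sin_nonneg_of_nonneg_of_le_pi hβ0 (by linarith [Real.pi_pos])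
  have ha1 : ⟪x,y⟫ ≤ (1:ℝ) := by
    calc ⟪x,y⟫ ≤ ‖x‖ * ‖y‖ := real_inner_le_norm x y
    _ = 1 := by rw [hx, hy]; ring
  have hb1 : ⟪y,z⟫ ≤ (1:ℝ) := by
    calc ⟪y,z⟫ ≤ ‖y‖ * ‖z‖ := real_inner_le_norm y z
    _ = 1 := by rw [hy, hz]; ring
  have hpa : ‖x - (⟪x,y⟫:ℝ) • y‖ ≤ Real.sin α := by
    have h : ‖x - (⟪x,y⟫:ℝ) • y‖^2 ≤ Real.sin α ^ 2 := by
      rw [hnp]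
      nlinarith [Real.sin_sq_add_cos_sq α, h1, hca]
    nlinarith [norm_nonneg (x - (⟪x,y⟫:ℝ) • y)]
  have hqb : ‖z - (⟪y,z⟫:ℝ) • y‖ ≤ Real.sin β := by
    have h : ‖z - (⟪y,z⟫:ℝ) • y‖^2 ≤ Real.sin β ^ 2 := by
      rw [hnq]
      nlinarith [Real.sin_sq_add_cos_sq β, h2, hcb]
    nlinarith [norm_nonneg (z - (⟪y,z⟫:ℝ) • y)]
  have hinner : -(‖x - (⟪x,y⟫:ℝ) • y‖ * ‖z - (⟪y,z⟫:ℝ) • y‖)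
      ≤ ⟪x - (⟪x,y⟫:ℝ) • y, z - (⟪y,z⟫:ℝ) • y⟫ := by
    have := abs_real_inner_le_norm (x - (⟪x,y⟫:ℝ) • y) (z - (⟪y,z⟫:ℝ) • y)
    cases' abs_le.mp this with h _
    linarith
  have hprod : ‖x - (⟪x,y⟫:ℝ) • y‖ * ‖z - (⟪y,z⟫:ℝ) • y‖ ≤ Real.sin α * Real.sin β :=
    mul_le_mul hpa hqb (norm_nonneg _) hsa
  have hab : Real.cos α * Real.cos β ≤ ⟪x,y⟫ * ⟪y,z⟫ :=
    mul_le_mul h1 h2 hcb (by linarith)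
  rw [Real.cos_add]
  linarith [hpq, hinner, hprod, hab]

lemma tendsto_smul_slope {E : Type*} [NormedAddCommGroup E] [NormedSpace ℝ E]
    {g : ℝ → E} {x : ℝ} {d : E} (hg : HasDerivAt g d x)
    {ε : ℕ → ℝ} (hpos : ∀ k, 0 < ε k) (hlim : Tendsto ε atTop (𝓝 0)) :
    Tendsto (fun k => (ε k)⁻¹ • (g (x + ε k) - g x)) atTop (𝓝 d) := by
  have hs := hasDerivAt_iff_tendsto_slope.mp hg
  have h2 : Tendsto (fun k => x + ε k) atTop (𝓝[≠] x) := by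
    apply tendsto_nhdsWithin_of_tendsto_nhds_of_eventually_within
    · simpa using (tendsto_const_nhds.add hlim :
        Tendsto (fun k => x + ε k) atTop (𝓝 (x + 0)))
    · filter_upwards with k
      simp only [Set.mem_compl_iff, Set.mem_singleton_iff]
      intro h
      have := hpos k
      linarith [(by linarith : ε k = 0)]
  have h3 := hs.comp h2
  apply h3.congr
  intro k
  simp [Function.comp, slope_def_module, add_sub_cancel_left]

/-- Fundamental theorem of calculus for Lipschitz functions on an open interval. -/
lemma lipschitz_ftc {E : Type*} [NormedAddCommGroup E] [NormedSpace ℝ E]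
    [FiniteDimensional ℝ E] [MeasurableSpace E] [BorelSpace E]
    {f : ℝ → E} {A B a b : ℝ} {L : NNReal}
    (hf : LipschitzOnWith L f (Set.Ioo A B)) (hab : a ≤ b) (hA : A < a) (hB : b < B) :
    f b - f a = ∫ t in a..b, deriv f t := by
  have hconts : ContinuousOn f (Set.Ioo A B) := hf.continuousOn
  have hBb : (0:ℝ) < B - b := by linarith
  set ε : ℕ → ℝ := fun k => (B - b) / (k + 2) with hεdef
  have hεpos : ∀ k, 0 < ε k := fun k => by positivity
  have hεle : ∀ k : ℕ, ε k ≤ (B - b) / 2 := by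
    intro k
    apply div_le_div_of_nonneg_left hBb.le (by norm_num)
    have : (0:ℝ) ≤ (k:ℝ) := Nat.cast_nonneg k
    linarith
  have hεlim : Tendsto ε atTop (𝓝 0) := by
    have h1 : Tendsto (fun k : ℕ => (k:ℝ) + 2) atTop atTop :=
      tendsto_atTop_add_const_right atTop 2 tendsto_natCast_atTop_atTop
    exact h1.const_div_atTop (B - b)
  have hma : a ∈ Set.Ioo A B := ⟨hA, lt_of_le_of_lt hab hB⟩
  have hmb : b ∈ Set.Ioo A B := ⟨hA.trans_le hab, hB⟩
  have hmak : ∀ k, a + ε k ∈ Set.Ioo A B := fun k =>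
    ⟨by linarith [hεpos k], by linarith [hεle k]⟩
  have hmbk : ∀ k, b + ε k ∈ Set.Ioo A B := fun k =>
    ⟨by linarith [hεpos k], by linarith [hεle k]⟩
  have hints : ∀ u v : ℝ, u ∈ Set.Ioo A B → v ∈ Set.Ioo A B →
      IntervalIntegrable f volume u v := fun u v hu hv =>
    (hconts.mono ((Set.ordConnected_Ioo).uIcc_subset hu hv)).intervalIntegrable
  have step1 : ∀ k, (∫ t in a..b, (ε k)⁻¹ • (f (t + ε k) - f t))
      = (ε k)⁻¹ • ((∫ t in b..(b + ε k), f t) - ∫ t in a..(a + ε k), f t) := by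
    intro k
    have hi1 : IntervalIntegrable (fun t => f (t + ε k)) volume a b := by
      have := (hints (a + ε k) (b + ε k) (hmak k) (hmbk k)).comp_add_right (ε k)
      simpa using this
    have hi2 : IntervalIntegrable f volume a b := hints a b hma hmb
    rw [intervalIntegral.integral_smul]
    congr 1
    rw [intervalIntegral.integral_sub hi1 hi2, integral_comp_add_right]
    have C1 : (∫ t in a..(a + ε k), f t) + (∫ t in (a + ε k)..(b + ε k), f t)
        = ∫ t in a..(b + ε k), f t :=
      intervalIntegral.integral_add_adjacent_intervals (hints _ _ hma (hmak k))
        (hints _ _ (hmak k) (hmbk k))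
    have C2 : (∫ t in a..b, f t) + (∫ t in b..(b + ε k), f t)
        = ∫ t in a..(b + ε k), f t :=
      intervalIntegral.integral_add_adjacent_intervals hi2 (hints _ _ hmb (hmbk k))
    have e1 : (∫ t in (a + ε k)..(b + ε k), f t)
        = (∫ t in a..(b + ε k), f t) - ∫ t in a..(a + ε k), f t := by
      rw [← C1]; abel
    have e2 : (∫ t in a..b, f t)
        = (∫ t in a..(b + ε k), f t) - ∫ t in b..(b + ε k), f t := by
      rw [← C2]; abel
    rw [e1, e2]; abel
  have hDb : HasDerivAt (fun u => ∫ x in b..u, f x) (f b) b := by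
    apply intervalIntegral.integral_hasDerivAt_right (hints b b hmb hmb)
    · exact (hconts.stronglyMeasurableAtFilter isOpen_Ioo) b hmb
    · exact hconts.continuousAt (isOpen_Ioo.mem_nhds hmb)
  have hDa : HasDerivAt (fun u => ∫ x in a..u, f x) (f a) a := by
    apply intervalIntegral.integral_hasDerivAt_right (hints a a hma hma)
    · exact (hconts.stronglyMeasurableAtFilter isOpen_Ioo) a hma
    · exact hconts.continuousAt (isOpen_Ioo.mem_nhds hma)
  have hTb : Tendsto (fun k => (ε k)⁻¹ • (∫ x in b..(b + ε k), f x)) atTop (𝓝 (f b)) := by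
    have := tendsto_smul_slope hDb hεpos hεlim
    simpa using this
  have hTa : Tendsto (fun k => (ε k)⁻¹ • (∫ x in a..(a + ε k), f x)) atTop (𝓝 (f a)) := by
    have := tendsto_smul_slope hDa hεpos hεlim
    simpa using this
  have hRHS : Tendsto (fun k => (ε k)⁻¹ •
      ((∫ t in b..(b + ε k), f t) - ∫ t in a..(a + ε k), f t)) atTop (𝓝 (f b - f a)) := by
    simpa [smul_sub] using hTb.sub hTa
  have hd : ∀ᵐ t : ℝ, t ∈ Set.Ioo A B → DifferentiableAt ℝ f t := by
    filter_upwards [hf.ae_differentiableWithinAt_of_mem_real] with t ht hts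
    exact (ht hts).differentiableAt (isOpen_Ioo.mem_nhds hts)
  have hIoc : Set.uIoc a b ⊆ Set.Ioo A B := by
    rw [Set.uIoc_of_le hab]
    exact fun r hr => ⟨hA.trans hr.1, hr.2.trans_lt hB⟩
  have hIocb : ∀ t ∈ Set.uIoc a b, t ≤ b := by
    rw [Set.uIoc_of_le hab]; exact fun t ht => ht.2
  have hLHS : Tendsto (fun k => ∫ t in a..b, (ε k)⁻¹ • (f (t + ε k) - f t)) atTop
      (𝓝 (∫ t in a..b, deriv f t)) := by
    apply intervalIntegral.tendsto_integral_filter_of_dominated_convergence (fun _ => (L:ℝ))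
    · filter_upwards with k
      apply ContinuousOn.aestronglyMeasurable _ measurableSet_uIoc
      apply ContinuousOn.smul continuousOn_const
      apply ContinuousOn.sub
      · apply hconts.comp (Continuous.continuousOn (continuous_id.add continuous_const))
        intro t ht
        have h1 := hIoc ht
        have h2 := hIocb t ht
        show t + ε k ∈ Set.Ioo A B
        exact ⟨by linarith [h1.1, hεpos k], by linarith [hεle k]⟩
      · exact hconts.mono hIoc
    · filter_upwards with k
      filter_upwards with t
      intro ht
      have h1 : t ∈ Set.Ioo A B := hIoc ht
      have h2 : t + ε k ∈ Set.Ioo A B :=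
        ⟨by linarith [h1.1, hεpos k], by linarith [hεle k, hIocb t ht]⟩
      have hdist := (lipschitzOnWith_iff_dist_le_mul.mp hf) (t + ε k) h2 t h1
      rw [dist_eq_norm] at hdist
      have hd2 : dist (t + ε k) t = ε k := by
        rw [Real.dist_eq, add_sub_cancel_left, abs_of_pos (hεpos k)]
      rw [hd2] at hdist
      rw [norm_smul, Real.norm_eq_abs, abs_of_pos (inv_pos.2 (hεpos k))]
      rw [inv_mul_le_iff₀ (hεpos k), mul_comm]
      exact hdist
    · exact intervalIntegrable_const
    · filter_upwards [hd] with t ht hmem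
      exact tendsto_smul_slope (ht (hIoc hmem)).hasDerivAt hεpos hεlim
  have hLHS2 : Tendsto (fun k => (ε k)⁻¹ •
      ((∫ t in b..(b + ε k), f t) - ∫ t in a..(a + ε k), f t)) atTop
      (𝓝 (∫ t in a..b, deriv f t)) := hLHS.congr step1
  exact tendsto_nhds_unique hRHS hLHS2

/-- If `f` takes unit values on an order-connected set and is `κ`-Lipschitz there, then
`⟪f t, f u⟫ ≥ cos (κ (t - u))` for `u ≤ t` with `κ(t-u) < π/2`. -/
lemma inner_ge_cos_aux {E : Type*} [NormedAddCommGroup E] [InnerProductSpace ℝ E]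
    {f : ℝ → E} {I : Set ℝ} (hIconn : I.OrdConnected) {κ : ℝ} (hκ : 0 < κ)
    (hunit : ∀ r ∈ I, ‖f r‖ = 1)
    (hlipκ : ∀ r ∈ I, ∀ v ∈ I, ‖f r - f v‖ ≤ κ * |r - v|)
    {t u : ℝ} (ht : t ∈ I) (hu : u ∈ I) (hut : u ≤ t) (hc : κ * (t - u) < π/2) :
    Real.cos (κ * (t - u)) ≤ ⟪f t, f u⟫ := by
  have hΔ : 0 ≤ t - u := by linarith
  set c : ℝ := κ * (t - u) with hcdef
  have hc0 : 0 ≤ c := by positivity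
  have hinner_self : ∀ r ∈ I, ⟪f r, f r⟫ = (1:ℝ) := by
    intro r hr
    rw [real_inner_self_eq_norm_sq, hunit r hr]; norm_num
  by_cases hΔ0 : t - u = 0
  · have htu : t = u := by linarith
    subst htu
    simp only [hcdef, sub_self, mul_zero, Real.cos_zero]
    exact le_of_eq (hinner_self t ht).symm
  have hΔpos : 0 < t - u := lt_of_le_of_ne hΔ (Ne.symm hΔ0)
  have hcpos : 0 < c := by positivity
  set α : ℕ → ℝ := fun N => 2 * Real.arcsin (c / (2 * N)) with hαdef
  have hclaim : ∀ N : ℕ, 1 ≤ N → (N:ℝ) * α N ≤ π/2 →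
      Real.cos ((N:ℝ) * α N) ≤ ⟪f t, f u⟫ := by
    intro N hN1 hNα
    have hNpos : (0:ℝ) < N := by exact_mod_cast hN1
    set δ : ℝ := (t - u) / N with hδdef
    have hδ0 : 0 ≤ δ := by positivity
    have hv : c / (2 * N) = κ * δ / 2 := by
      rw [hδdef, hcdef]; field_simp
    have hv0 : 0 ≤ c / (2 * N) := by positivity
    have hN1' : (1:ℝ) ≤ (N:ℝ) := by exact_mod_cast hN1
    have hv1 : c / (2 * N) ≤ 1 := by
      have h1 : c / (2 * N) ≤ c / 2 := by
        apply div_le_div_of_nonneg_left hc0 (by norm_num)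
        linarith
      have := Real.pi_le_four
      linarith
    have hα0 : 0 ≤ α N := by
      have := Real.arcsin_nonneg.mpr hv0
      simp only [hαdef]
      linarith
    have hαN : α N ≤ π/2 := by
      calc α N = 1 * α N := (one_mul _).symm
        _ ≤ (N:ℝ) * α N :=
            mul_le_mul_of_nonneg_right (by exact_mod_cast hN1) hα0
        _ ≤ π/2 := hNα
    have hcosα : Real.cos (α N) = 1 - (κ * δ)^2 / 2 := by
      have hsc := Real.sin_sq_add_cos_sq (Real.arcsin (c / (2*N)))
      have hsin := Real.sin_arcsin (by linarith : (-1:ℝ) ≤ c / (2*N)) hv1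
      have hkey : Real.cos (2 * Real.arcsin (c / (2*N))) = 1 - 2*(c/(2*N))^2 := by
        rw [Real.cos_two_mul]
        nlinarith [hsin, hsc]
      simp only [hαdef]
      rw [hkey, hv]
      ring
    have hNδ : (N:ℝ) * δ = t - u := by
      rw [hδdef]; field_simp
    have hmemi : ∀ i : ℕ, i ≤ N → u + i * δ ∈ I := by
      intro i hi
      apply hIconn.out hu ht
      have hi0 : (0:ℝ) ≤ (i:ℝ) := Nat.cast_nonneg i
      constructor
      · have := mul_nonneg hi0 hδ0
        linarith
      · have hiN : (i:ℝ) ≤ N := by exact_mod_cast hi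
        have := mul_le_mul_of_nonneg_right hiN hδ0
        linarith [hNδ]
    have hstep : ∀ i : ℕ, i < N →
        Real.cos (α N) ≤ ⟪f (u + ((i:ℝ)+1) * δ), f (u + (i:ℝ) * δ)⟫ := by
      intro i hi
      have h1 : u + ((i:ℝ)+1) * δ ∈ I := by
        have := hmemi (i+1) hi
        push_cast at this
        exact this
      have h2 : u + (i:ℝ) * δ ∈ I := hmemi i hi.le
      have hnd : ‖f (u + ((i:ℝ)+1) * δ) - f (u + (i:ℝ) * δ)‖ ≤ κ * δ := by
        have hl := hlipκ _ h1 _ h2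
        have habs : |(u + ((i:ℝ)+1) * δ) - (u + (i:ℝ) * δ)| = δ := by
          rw [show (u + ((i:ℝ)+1) * δ) - (u + (i:ℝ) * δ) = δ by ring, abs_of_nonneg hδ0]
        rw [habs] at hl
        exact hl
      have hip : ⟪f (u + ((i:ℝ)+1) * δ), f (u + (i:ℝ) * δ)⟫
          = 1 - ‖f (u + ((i:ℝ)+1) * δ) - f (u + (i:ℝ) * δ)‖^2 / 2 := by
        rw [norm_sub_sq_real, hunit _ h1, hunit _ h2]
        ring
      rw [hip, hcosα]
      nlinarith [norm_nonneg (f (u + ((i:ℝ)+1) * δ) - f (u + (i:ℝ) * δ)), hκ.le, hδ0]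
    have hind : ∀ i : ℕ, i ≤ N → Real.cos ((i:ℝ) * α N) ≤ ⟪f (u + (i:ℝ) * δ), f u⟫ := by
      intro i
      induction i with
      | zero =>
          intro _
          simp only [Nat.cast_zero, zero_mul, Real.cos_zero, add_zero]
          exact le_of_eq (hinner_self u hu).symm
      | succ i ih =>
          intro hi
          have hiN : i ≤ N := Nat.le_of_succ_le hi
          have hIH := ih hiN
          have hβ0 : 0 ≤ (i:ℝ) * α N := by positivity
          have hβ : (i:ℝ) * α N ≤ π/2 := by
            have hiN' : (i:ℝ) ≤ N := by exact_mod_cast hiN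
            nlinarith
          have h1 : u + ((i:ℝ)+1) * δ ∈ I := by
            have := hmemi (i+1) hi
            push_cast at this
            exact this
          have h2 : u + (i:ℝ) * δ ∈ I := hmemi i hiN
          have hres := cosTriangle (hunit _ h1) (hunit _ h2) (hunit _ hu)
            hα0 hαN hβ0 hβ (hstep i hi) hIH
          push_cast
          rw [show ((i:ℝ)+1) * α N = α N + (i:ℝ) * α N by ring]
          exact hres
    have hfin := hind N le_rfl
    rw [hNδ] at hfin
    rw [show u + (t - u) = t by ring] at hfin
    exact hfin
  -- limit N * α N → c
  have harc : Tendsto (fun y : ℝ => Real.arcsin y / y) (𝓝[≠] 0) (𝓝 1) := by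
    have h := hasDerivAt_iff_tendsto_slope.mp
      (Real.hasDerivAt_arcsin (by norm_num : (0:ℝ) ≠ -1) (by norm_num : (0:ℝ) ≠ 1))
    have he : (1:ℝ) / Real.sqrt (1 - 0^2) = 1 := by norm_num
    rw [he] at h
    apply h.congr
    intro y
    simp [slope_def_field, Real.arcsin_zero]
  have h2N : Tendsto (fun N : ℕ => 2 * (N:ℝ)) atTop atTop := by
    apply Tendsto.const_mul_atTop (by norm_num : (0:ℝ) < 2) tendsto_natCast_atTop_atTop
  have hy : Tendsto (fun N : ℕ => c / (2 * N)) atTop (𝓝[≠] 0) := by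
    apply tendsto_nhdsWithin_of_tendsto_nhds_of_eventually_within
    · exact h2N.const_div_atTop c
    · filter_upwards [eventually_ge_atTop 1] with N hN
      have hNpos : (0:ℝ) < N := by exact_mod_cast hN
      simp only [Set.mem_compl_iff, Set.mem_singleton_iff]
      exact ne_of_gt (by positivity)
  have hca : Tendsto (fun N : ℕ => (N:ℝ) * α N) atTop (𝓝 c) := by
    have hcomp := (harc.comp hy).const_mul c
    rw [mul_one] at hcomp
    apply hcomp.congr'
    filter_upwards [eventually_ge_atTop 1] with N hN
    have hNpos : (0:ℝ) < N := by exact_mod_cast hN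
    show c * (Real.arcsin (c/(2*N)) / (c/(2*N))) = (N:ℝ) * α N
    simp only [hαdef]
    field_simp
  have hcos : Tendsto (fun N : ℕ => Real.cos ((N:ℝ) * α N)) atTop (𝓝 (Real.cos c)) :=
    (Real.continuous_cos.tendsto c).comp hca
  apply le_of_tendsto hcos
  filter_upwards [eventually_ge_atTop 1, hca.eventually_lt_const hc] with N hN1 hN2
  exact hclaim N hN1 hN2.le

/-- **Tangent-ball avoidance for curves of bounded curvature ([D6, Prop. 2(i)]).**
Let `γ` be a unit-speed `C^{1,1}` curve on `I = (−π/(2κ), π/(2κ))` in `ℝⁿ` with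
`‖γ''(s)‖ ≤ κ` a.e. on `I`, where `κ > 0`. Then for every `s ∈ I`, `γ(s)` avoids
every open ball of radius `1/κ` centered at `γ(0) + (1/κ)·w` for a unit vector `w`
orthogonal to `γ'(0)` (i.e. the curve misses `O_{γ(0)}(γ'(0), 1/κ)`). -/
theorem curve_avoids_tangent_balls {n : ℕ} (κ : ℝ) (hκ : 0 < κ)
    (γ : ℝ → EuclideanSpace ℝ (Fin n))
    (I : Set ℝ) (hI : I = Set.Ioo (-(Real.pi / (2 * κ))) (Real.pi / (2 * κ)))
    (hdiff : ∀ s ∈ I, DifferentiableAt ℝ γ s)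
    (hlip : ∃ L : NNReal, LipschitzOnWith L (deriv γ) I)
    (hunit : ∀ s ∈ I, ‖deriv γ s‖ = 1)
    (hcurv : ∀ᵐ s ∂(MeasureTheory.volume : MeasureTheory.Measure ℝ),
      s ∈ I → ‖deriv (deriv γ) s‖ ≤ κ) :
    ∀ s ∈ I, ∀ w : EuclideanSpace ℝ (Fin n),
      ⟪deriv γ 0, w⟫ = 0 → ‖w‖ = 1 →
      γ s ∉ Metric.ball (γ 0 + κ⁻¹ • w) κ⁻¹ := by
  intro s hs w hworth hwnorm
  obtain ⟨L, hL⟩ := hlip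
  have hπκ : 0 < π / (2*κ) := by positivity
  have h0I : (0:ℝ) ∈ I := by rw [hI]; exact ⟨by linarith, hπκ⟩
  have hIconn : I.OrdConnected := by rw [hI]; exact Set.ordConnected_Ioo
  have hsmem : -(π/(2*κ)) < s ∧ s < π/(2*κ) := by rwa [hI, Set.mem_Ioo] at hs
  have habs_s : |s| < π/(2*κ) := abs_lt.mpr hsmem
  have hκabs : κ * |s| < π/2 := by
    have h3 : κ * (π/(2*κ)) = π/2 := by field_simp
    nlinarith [abs_nonneg s]
  -- κ-Lipschitz estimate for deriv γ
  have hlipκ : ∀ r ∈ I, ∀ v ∈ I, ‖deriv γ r - deriv γ v‖ ≤ κ * |r - v| := by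
    have key : ∀ r ∈ I, ∀ v ∈ I, v ≤ r → ‖deriv γ r - deriv γ v‖ ≤ κ * |r - v| := by
      intro r hr v hv hvr
      have hr' : r ∈ Set.Ioo (-(π/(2*κ))) (π/(2*κ)) := by rwa [hI] at hr
      have hv' : v ∈ Set.Ioo (-(π/(2*κ))) (π/(2*κ)) := by rwa [hI] at hv
      have hL' : LipschitzOnWith L (deriv γ) (Set.Ioo (-(π/(2*κ))) (π/(2*κ))) := by
        rwa [hI] at hL
      have hftc := lipschitz_ftc hL' hvr hv'.1 hr'.2
      rw [hftc, abs_of_nonneg (by linarith : (0:ℝ) ≤ r - v)]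
      have hae : ∀ᵐ x ∂(volume.restrict (Set.uIoc v r)), ‖deriv (deriv γ) x‖ ≤ κ := by
        have h1 : ∀ᵐ x ∂(volume.restrict (Set.uIoc v r)), x ∈ I → ‖deriv (deriv γ) x‖ ≤ κ :=
          ae_restrict_of_ae hcurv
        filter_upwards [h1, ae_restrict_mem measurableSet_uIoc] with x hx hmem
        apply hx
        rw [Set.uIoc_of_le hvr] at hmem
        rw [hI]
        exact ⟨hv'.1.trans hmem.1, hmem.2.trans_lt hr'.2⟩
      have hbound := intervalIntegral.norm_integral_le_abs_of_norm_le hae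
        (intervalIntegrable_const (c := κ))
      calc ‖∫ x in v..r, deriv (deriv γ) x‖ ≤ |∫ _x in v..r, κ| := hbound
        _ = κ * (r - v) := by
          rw [intervalIntegral.integral_const, smul_eq_mul,
            abs_of_nonneg (by nlinarith : (0:ℝ) ≤ (r - v) * κ)]
          ring
    intro r hr v hv
    rcases le_total v r with h | h
    · exact key r hr v hv h
    · rw [norm_sub_rev, abs_sub_comm]; exact key v hv r hr h
  -- cosine lower bound for inner products of unit tangents
  have hcos : ∀ t ∈ I, ∀ v ∈ I, κ * |t - v| < π/2 →
      Real.cos (κ*(t-v)) ≤ ⟪deriv γ t, deriv γ v⟫ := by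
    intro t ht v hv hlt
    rcases le_total v t with h | h
    · exact inner_ge_cos_aux hIconn hκ hunit hlipκ ht hv h
        (by rwa [abs_of_nonneg (by linarith : (0:ℝ) ≤ t - v)] at hlt)
    · have := inner_ge_cos_aux hIconn hκ hunit hlipκ hv ht h
        (by rwa [abs_sub_comm, abs_of_nonneg (by linarith : (0:ℝ) ≤ v - t)] at hlt)
      rw [show κ*(t-v) = -(κ*(v-t)) by ring, Real.cos_neg, real_inner_comm]
      exact this
  -- basic integrability and FTC for γ
  have hsub : Set.uIcc 0 s ⊆ I := hIconn.uIcc_subset h0I hs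
  have hcontf : ContinuousOn (deriv γ) (Set.uIcc 0 s) := hL.continuousOn.mono hsub
  have hfint : IntervalIntegrable (deriv γ) volume 0 s := hcontf.intervalIntegrable
  have hFTCγ : ∫ t in (0:ℝ)..s, deriv γ t = γ s - γ 0 :=
    intervalIntegral.integral_deriv_eq_sub (fun x hx => hdiff x (hsub hx)) hfint
  have hinner_int : ∀ v : EuclideanSpace ℝ (Fin n),
      ⟪γ s - γ 0, v⟫ = ∫ t in (0:ℝ)..s, ⟪deriv γ t, v⟫ := by
    intro v
    have hcomm := (innerSL ℝ v).intervalIntegral_comp_comm hfint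
    calc ⟪γ s - γ 0, v⟫ = ⟪v, γ s - γ 0⟫ := real_inner_comm _ _
      _ = ∫ t in (0:ℝ)..s, ⟪v, deriv γ t⟫ := by
          rw [← hFTCγ]
          exact hcomm.symm
      _ = ∫ t in (0:ℝ)..s, ⟪deriv γ t, v⟫ :=
          intervalIntegral.integral_congr (fun t _ => real_inner_comm _ _)
  -- antiderivative computations
  have hcos_int : ∀ (a b m : ℝ), (∫ t in a..b, Real.cos (κ*(t - m)))
      = κ⁻¹ * Real.sin (κ*(b-m)) - κ⁻¹ * Real.sin (κ*(a-m)) := by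
    intro a b m
    have hder : ∀ x ∈ Set.uIcc a b,
        HasDerivAt (fun t => κ⁻¹ * Real.sin (κ*(t-m))) (Real.cos (κ*(x-m))) x := by
      intro x _
      have h1 : HasDerivAt (fun t : ℝ => κ*(t-m)) κ x := by
        simpa using ((hasDerivAt_id x).sub_const m).const_mul κ
      have h2 := (Real.hasDerivAt_sin (κ*(x-m))).comp x h1
      have h3 := h2.const_mul κ⁻¹
      exact h3.congr_deriv (by field_simp)
    rw [intervalIntegral.integral_eq_sub_of_hasDerivAt hder
      ((Real.continuous_cos.comp (continuous_const.mul (continuous_id.sub continuous_const))).intervalIntegrable a b)]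
  have hsin_int : ∀ (a b : ℝ), (∫ t in a..b, Real.sin (κ*t))
      = κ⁻¹ * Real.cos (κ*a) - κ⁻¹ * Real.cos (κ*b) := by
    intro a b
    have hder : ∀ x ∈ Set.uIcc a b,
        HasDerivAt (fun t => -(κ⁻¹ * Real.cos (κ*t))) (Real.sin (κ*x)) x := by
      intro x _
      have h1 : HasDerivAt (fun t : ℝ => κ*t) κ x := by
        simpa using (hasDerivAt_id x).const_mul κ
      have h2 := (Real.hasDerivAt_cos (κ*x)).comp x h1
      have h3 := (h2.const_mul κ⁻¹).neg
      exact h3.congr_deriv (by field_simp)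
    rw [intervalIntegral.integral_eq_sub_of_hasDerivAt hder
      ((Real.continuous_sin.comp (continuous_const.mul continuous_id)).intervalIntegrable a b)]
    ring
  -- |t| ≤ |s| on uIcc 0 s
  have habs_t : ∀ t ∈ Set.uIcc 0 s, |t| ≤ |s| := by
    intro t ht
    rcases le_total 0 s with h | h
    · rw [Set.uIcc_of_le h] at ht
      rw [abs_of_nonneg ht.1, abs_of_nonneg h]; exact ht.2
    · rw [Set.uIcc_of_ge h] at ht
      rw [abs_of_nonpos ht.2, abs_of_nonpos h]; linarith [ht.1]
  -- K1 : bound on ⟪γ s - γ 0, w⟫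
  have hK1 : |⟪γ s - γ 0, w⟫| ≤ κ⁻¹ * (1 - Real.cos (κ*s)) := by
    have hpt : ∀ t ∈ Set.uIcc 0 s, |⟪deriv γ t, w⟫| ≤ |Real.sin (κ*t)| := by
      intro t htm
      have htI : t ∈ I := hsub htm
      have habs := habs_t t htm
      have hlt : κ * |t| < π/2 := by
        have : κ * |t| ≤ κ * |s| := by nlinarith [abs_nonneg t]
        linarith [hκabs]
      have ha := hcos t htI 0 h0I (by simpa using hlt)
      rw [sub_zero] at ha
      have hat : |κ * t| ≤ π/2 := by
        rw [abs_mul, abs_of_pos hκ]; linarith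
      have hca : 0 ≤ Real.cos (κ*t) :=
        Real.cos_nonneg_of_mem_Icc (abs_le.mp hat |>.imp (fun h => by linarith) id)
      have ha1 : ⟪deriv γ t, deriv γ 0⟫ ≤ 1 := by
        calc ⟪deriv γ t, deriv γ 0⟫ ≤ ‖deriv γ t‖ * ‖deriv γ 0‖ := real_inner_le_norm _ _
          _ = 1 := by rw [hunit t htI, hunit 0 h0I]; ring
      have hw0 : ⟪deriv γ t, w⟫ = ⟪deriv γ t - (⟪deriv γ t, deriv γ 0⟫:ℝ) • deriv γ 0, w⟫ := by
        rw [inner_sub_left, real_inner_smul_left, hworth]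
        ring
      have hn2 : ‖deriv γ t - (⟪deriv γ t, deriv γ 0⟫:ℝ) • deriv γ 0‖^2
          = 1 - ⟪deriv γ t, deriv γ 0⟫^2 := by
        rw [norm_sub_sq_real, real_inner_smul_right, norm_smul, hunit t htI, hunit 0 h0I,
          Real.norm_eq_abs, mul_one, sq_abs]
        ring
      have hb : |⟪deriv γ t, w⟫| ≤ ‖deriv γ t - (⟪deriv γ t, deriv γ 0⟫:ℝ) • deriv γ 0‖ := by
        rw [hw0]
        calc |⟪deriv γ t - (⟪deriv γ t, deriv γ 0⟫:ℝ) • deriv γ 0, w⟫|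
            ≤ ‖deriv γ t - (⟪deriv γ t, deriv γ 0⟫:ℝ) • deriv γ 0‖ * ‖w‖ :=
              abs_real_inner_le_norm _ _
          _ = ‖deriv γ t - (⟪deriv γ t, deriv γ 0⟫:ℝ) • deriv γ 0‖ := by rw [hwnorm, mul_one]
      have hsq : |⟪deriv γ t, w⟫|^2 ≤ Real.sin (κ*t)^2 := by
        have h1 : |⟪deriv γ t, w⟫|^2 ≤ 1 - ⟪deriv γ t, deriv γ 0⟫^2 := by
          calc |⟪deriv γ t, w⟫|^2
              ≤ ‖deriv γ t - (⟪deriv γ t, deriv γ 0⟫:ℝ) • deriv γ 0‖^2 := by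
                apply pow_le_pow_left₀ (abs_nonneg _) hb
            _ = 1 - ⟪deriv γ t, deriv γ 0⟫^2 := hn2
        have h2 : Real.cos (κ*t)^2 ≤ ⟪deriv γ t, deriv γ 0⟫^2 := by nlinarith
        nlinarith [Real.sin_sq_add_cos_sq (κ*t)]
      nlinarith [abs_nonneg (⟪deriv γ t, w⟫ : ℝ), abs_nonneg (Real.sin (κ*t)), sq_abs (Real.sin (κ*t))]
    rw [hinner_int w]
    have hib : IntervalIntegrable (fun t => |Real.sin (κ*t)|) volume 0 s :=
      ((Real.continuous_sin.comp (continuous_const.mul continuous_id)).abs).intervalIntegrable 0 s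
    have hbound := intervalIntegral.norm_integral_le_abs_of_norm_le
      (f := fun t => (⟪deriv γ t, w⟫ : ℝ)) (g := fun t => |Real.sin (κ*t)|)
      (by
        filter_upwards [ae_restrict_mem measurableSet_uIoc] with t htm
        rw [Real.norm_eq_abs]
        exact hpt t (Set.uIoc_subset_uIcc htm)) hib
    rw [Real.norm_eq_abs] at hbound
    refine hbound.trans ?_
    -- compute ∫ |sin (κ t)|
    rcases le_total 0 s with h | h
    · have heq : Set.EqOn (fun t => |Real.sin (κ*t)|) (fun t => Real.sin (κ*t))
          (Set.uIcc 0 s) := by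
        intro t htm
        rw [Set.uIcc_of_le h] at htm
        have h1 : 0 ≤ κ * t := by nlinarith [htm.1]
        have h2 : κ * t ≤ π := by
          have hh := hκabs
          rw [abs_of_nonneg h] at hh
          have hts : κ * t ≤ κ * s := by nlinarith [htm.2]
          linarith [Real.pi_pos]
        simp only
        rw [abs_of_nonneg (Real.sin_nonneg_of_nonneg_of_le_pi h1 h2)]
      rw [intervalIntegral.integral_congr heq, hsin_int 0 s, mul_zero, Real.cos_zero]
      rw [abs_of_nonneg (by nlinarith [Real.cos_le_one (κ*s), inv_pos.2 hκ] :
        (0:ℝ) ≤ κ⁻¹ * 1 - κ⁻¹ * Real.cos (κ*s))]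
      have : κ⁻¹ * 1 - κ⁻¹ * Real.cos (κ*s) = κ⁻¹ * (1 - Real.cos (κ*s)) := by ring
      linarith [this.le]
    · have heq : Set.EqOn (fun t => |Real.sin (κ*t)|) (fun t => -Real.sin (κ*t))
          (Set.uIcc 0 s) := by
        intro t htm
        rw [Set.uIcc_of_ge h] at htm
        have h1 : κ * t ≤ 0 := by nlinarith [htm.2]
        have h2 : -π ≤ κ * t := by
          have hh := hκabs
          rw [abs_of_nonpos h] at hh
          have hst : κ * s ≤ κ * t := by nlinarith [htm.1]
          linarith [Real.pi_pos]
        simp only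
        rw [abs_of_nonpos (Real.sin_nonpos_of_nonpos_of_neg_pi_le h1 h2)]
      rw [intervalIntegral.integral_congr heq, intervalIntegral.integral_neg, hsin_int 0 s,
        mul_zero, Real.cos_zero]
      rw [abs_neg, abs_of_nonneg (by nlinarith [Real.cos_le_one (κ*s), inv_pos.2 hκ] :
        (0:ℝ) ≤ κ⁻¹ * 1 - κ⁻¹ * Real.cos (κ*s))]
      have : κ⁻¹ * 1 - κ⁻¹ * Real.cos (κ*s) = κ⁻¹ * (1 - Real.cos (κ*s)) := by ring
      linarith [this.le]
  -- K2 : chord length lower bound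
  have hK2 : 2 * κ⁻¹ * |Real.sin (κ*(s/2))| ≤ ‖γ s - γ 0‖ := by
    have hmI : s/2 ∈ I := by
      apply hsub
      rcases le_total 0 s with h | h
      · rw [Set.uIcc_of_le h]; exact ⟨by linarith, by linarith⟩
      · rw [Set.uIcc_of_ge h]; exact ⟨by linarith, by linarith⟩
    have hpt2 : ∀ t ∈ Set.uIcc 0 s, Real.cos (κ*(t - s/2)) ≤ ⟪deriv γ t, deriv γ (s/2)⟫ := by
      intro t htm
      apply hcos t (hsub htm) (s/2) hmI
      have h1 : |t - s/2| ≤ |s|/2 := by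
        rcases le_total 0 s with h | h
        · rw [Set.uIcc_of_le h] at htm
          rw [abs_of_nonneg h, abs_le]
          constructor <;> [linarith [htm.1]; linarith [htm.2]]
        · rw [Set.uIcc_of_ge h] at htm
          rw [abs_of_nonpos h, abs_le]
          constructor <;> [linarith [htm.1]; linarith [htm.2]]
      have h2 : κ * (|s|/2) < π/4 := by
        nlinarith [hκabs]
      nlinarith [abs_nonneg (t - s/2), Real.pi_pos]
    have hiconti : IntervalIntegrable (fun t => (⟪deriv γ t, deriv γ (s/2)⟫ : ℝ)) volume 0 s :=
      (hcontf.inner continuousOn_const).intervalIntegrable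
    have hicontc : IntervalIntegrable (fun t => Real.cos (κ*(t - s/2))) volume 0 s :=
      ((Real.continuous_cos.comp (continuous_const.mul (continuous_id.sub continuous_const))).intervalIntegrable 0 s)
    have hbase : |⟪γ s - γ 0, deriv γ (s/2)⟫| ≤ ‖γ s - γ 0‖ := by
      calc |⟪γ s - γ 0, deriv γ (s/2)⟫| ≤ ‖γ s - γ 0‖ * ‖deriv γ (s/2)‖ :=
        abs_real_inner_le_norm _ _
        _ = ‖γ s - γ 0‖ := by rw [hunit _ hmI, mul_one]
    rcases le_total 0 s with h | h
    · have hmono := intervalIntegral.integral_mono_on h hicontc hiconti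
        (fun t htm => hpt2 t (by rwa [Set.uIcc_of_le h]))
      rw [hcos_int 0 s (s/2), hinner_int (deriv γ (s/2))] at *
      have hsimp : κ⁻¹ * Real.sin (κ*(s - s/2)) - κ⁻¹ * Real.sin (κ*((0:ℝ) - s/2))
          = 2 * κ⁻¹ * Real.sin (κ*(s/2)) := by
        rw [show κ*(s - s/2) = κ*(s/2) by ring, show κ*((0:ℝ) - s/2) = -(κ*(s/2)) by ring,
          Real.sin_neg]
        ring
      have hsin_nonneg : 0 ≤ Real.sin (κ*(s/2)) := by
        apply Real.sin_nonneg_of_nonneg_of_le_pi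
        · positivity
        · have hh := hκabs
          rw [abs_of_nonneg h] at hh
          nlinarith [Real.pi_pos]
      rw [abs_of_nonneg hsin_nonneg]
      have := hmono
      rw [hsimp] at this
      calc 2 * κ⁻¹ * Real.sin (κ*(s/2)) ≤ ∫ t in (0:ℝ)..s, ⟪deriv γ t, deriv γ (s/2)⟫ := this
        _ ≤ |∫ t in (0:ℝ)..s, (⟪deriv γ t, deriv γ (s/2)⟫:ℝ)| := le_abs_self _
        _ ≤ ‖γ s - γ 0‖ := hbase
    · have hicontc' : IntervalIntegrable (fun t => Real.cos (κ*(t - s/2))) volume s 0 :=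
        ((Real.continuous_cos.comp (continuous_const.mul (continuous_id.sub continuous_const))).intervalIntegrable s 0)
      have hiconti' : IntervalIntegrable (fun t => (⟪deriv γ t, deriv γ (s/2)⟫ : ℝ)) volume s 0 :=
        ((hL.continuousOn.mono (hIconn.uIcc_subset hs h0I)).inner continuousOn_const).intervalIntegrable
      have hmono := intervalIntegral.integral_mono_on h hicontc' hiconti'
        (fun t htm => hpt2 t (by rw [Set.uIcc_of_ge h]; exact htm))
      have hsymm : (∫ t in s..(0:ℝ), Real.cos (κ*(t - s/2)))
          = -(∫ t in (0:ℝ)..s, Real.cos (κ*(t - s/2))) := by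
        rw [intervalIntegral.integral_symm]
      have hsymm2 : (∫ t in s..(0:ℝ), (⟪deriv γ t, deriv γ (s/2)⟫:ℝ))
          = -(∫ t in (0:ℝ)..s, (⟪deriv γ t, deriv γ (s/2)⟫:ℝ)) := by
        rw [intervalIntegral.integral_symm]
      rw [hsymm, hsymm2, hcos_int 0 s (s/2)] at hmono
      have hsimp : κ⁻¹ * Real.sin (κ*(s - s/2)) - κ⁻¹ * Real.sin (κ*((0:ℝ) - s/2))
          = 2 * κ⁻¹ * Real.sin (κ*(s/2)) := by
        rw [show κ*(s - s/2) = κ*(s/2) by ring, show κ*((0:ℝ) - s/2) = -(κ*(s/2)) by ring,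
          Real.sin_neg]
        ring
      rw [hsimp] at hmono
      have hsin_nonpos : Real.sin (κ*(s/2)) ≤ 0 := by
        apply Real.sin_nonpos_of_nonpos_of_neg_pi_le
        · nlinarith
        · have hh := hκabs
          rw [abs_of_nonpos h] at hh
          nlinarith [Real.pi_pos]
      rw [abs_of_nonpos hsin_nonpos]
      have hfinal : 2 * κ⁻¹ * -Real.sin (κ*(s/2))
          ≤ -(∫ t in (0:ℝ)..s, (⟪deriv γ t, deriv γ (s/2)⟫:ℝ)) := by linarith
      calc 2 * κ⁻¹ * -Real.sin (κ*(s/2))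
          ≤ -(∫ t in (0:ℝ)..s, (⟪deriv γ t, deriv γ (s/2)⟫:ℝ)) := hfinal
        _ ≤ |∫ t in (0:ℝ)..s, (⟪deriv γ t, deriv γ (s/2)⟫:ℝ)| := neg_le_abs _
        _ ≤ ‖γ s - γ 0‖ := by rw [← hinner_int (deriv γ (s/2))]; exact hbase
  -- final assembly
  have hhalf : Real.sin (κ*(s/2))^2 = (1 - Real.cos (κ*s))/2 := by
    have h1 := Real.cos_two_mul (κ*(s/2))
    have h2 := Real.sin_sq_add_cos_sq (κ*(s/2))
    have h3 : 2*(κ*(s/2)) = κ*s := by ring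
    rw [h3] at h1
    nlinarith
  have h2 : 2*κ⁻¹^2*(1 - Real.cos (κ*s)) ≤ ‖γ s - γ 0‖^2 := by
    have hK2sq : (2 * κ⁻¹ * |Real.sin (κ*(s/2))|)^2 ≤ ‖γ s - γ 0‖^2 :=
      pow_le_pow_left₀ (by positivity) hK2 2
    have : (2 * κ⁻¹ * |Real.sin (κ*(s/2))|)^2 = 2*κ⁻¹^2*(1 - Real.cos (κ*s)) := by
      rw [mul_pow, mul_pow, sq_abs, hhalf]
      ring
    linarith
  have h3 : 2*κ⁻¹*⟪γ s - γ 0, w⟫ ≤ 2*κ⁻¹^2*(1 - Real.cos (κ*s)) := by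
    have hle := le_abs_self (⟪γ s - γ 0, w⟫ : ℝ)
    have hκinv : (0:ℝ) < κ⁻¹ := inv_pos.2 hκ
    nlinarith [hK1]
  have hexp : ‖γ s - (γ 0 + κ⁻¹ • w)‖^2
      = ‖γ s - γ 0‖^2 - 2*κ⁻¹*⟪γ s - γ 0, w⟫ + κ⁻¹^2 := by
    have he : γ s - (γ 0 + κ⁻¹ • w) = (γ s - γ 0) - κ⁻¹ • w := by abel
    rw [he, norm_sub_sq_real, real_inner_smul_right, norm_smul, hwnorm,
      Real.norm_eq_abs, abs_of_pos (inv_pos.2 hκ), mul_one]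
    ring
  have h4 : κ⁻¹^2 ≤ ‖γ s - (γ 0 + κ⁻¹ • w)‖^2 := by
    rw [hexp]; linarith
  have hfinal : κ⁻¹ ≤ ‖γ s - (γ 0 + κ⁻¹ • w)‖ := by
    nlinarith [norm_nonneg (γ s - (γ 0 + κ⁻¹ • w)), inv_pos.2 hκ]
  intro hball
  rw [Metric.mem_ball, dist_eq_norm] at hball
  linarith
end

section
/- Let γ be a unit-speed curve in ℝⁿ defined near 0 such that γ''(0) exists and γ''(0) ≠ 0. Then for every R > 1/‖γ''(0)‖ there exists δ > 0 such that γ(t) ∈ B(γ(0) + R·γ''(0)/‖γ''(0)‖, R) for all t ∈ (0, δ). -/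
set_option maxHeartbeats 1000000

open scoped RealInnerProductSpace

/-- **A curve enters every tangent ball larger than its osculating circle
([D6, Prop. 2(ii)]).** Let `γ` be a unit-speed curve in `ℝⁿ` defined near `0` such
that `γ''(0)` exists and `γ''(0) ≠ 0`. Then for every `R > 1/‖γ''(0)‖` there is
`δ > 0` with `γ(t) ∈ B(γ(0) + R·γ''(0)/‖γ''(0)‖, R)` for all `t ∈ (0, δ)`. -/
theorem curve_enters_large_tangent_ball {n : ℕ}
    (γ : ℝ → EuclideanSpace ℝ (Fin n)) (a : EuclideanSpace ℝ (Fin n))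
    (hdiff : ∀ᶠ s in nhds (0 : ℝ), DifferentiableAt ℝ γ s)
    (hunit : ∀ᶠ s in nhds (0 : ℝ), ‖deriv γ s‖ = 1)
    (hsecond : HasDerivAt (deriv γ) a 0)
    (ha : a ≠ 0) :
    ∀ R : ℝ, 1 / ‖a‖ < R → ∃ δ > (0 : ℝ), ∀ t ∈ Set.Ioo (0 : ℝ) δ,
      γ t ∈ Metric.ball (γ 0 + (R * ‖a‖⁻¹) • a) R := by
  intro R hR
  set v := deriv γ 0 with hvdef
  have hna : (0 : ℝ) < ‖a‖ := norm_pos_iff.mpr ha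
  have hv : ‖v‖ = 1 := hunit.self_of_nhds
  have hR0 : (0 : ℝ) < R := lt_trans (by positivity) hR
  have hd : (0 : ℝ) < R * ‖a‖ - 1 := by
    have := (div_lt_iff₀ hna).mp hR
    linarith
  set d := R * ‖a‖ - 1 with hddef
  set ε := d / (8 * R) with hεdef
  have hε : 0 < ε := by positivity
  clear_value d ε
  -- orthogonality of v and a
  have horth : ⟪v, a⟫ = 0 := by
    have h1 : HasDerivAt (fun s => ⟪deriv γ s, deriv γ s⟫) (⟪v, a⟫ + ⟪a, v⟫) 0 :=
      hsecond.inner ℝ hsecond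
    have h2 : HasDerivAt (fun s => ⟪deriv γ s, deriv γ s⟫) 0 0 := by
      have heq : (fun s => ⟪deriv γ s, deriv γ s⟫) =ᶠ[nhds (0 : ℝ)] fun _ => (1 : ℝ) := by
        filter_upwards [hunit] with s hs
        rw [real_inner_self_eq_norm_sq, hs]; norm_num
      exact (hasDerivAt_const (0 : ℝ) (1 : ℝ)).congr_of_eventuallyEq heq
    have h3 := h1.unique h2
    have hc : ⟪v, a⟫ = ⟪a, v⟫ := real_inner_comm a v
    linarith
  -- the remainder function
  set g : ℝ → EuclideanSpace ℝ (Fin n) :=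
    fun t => γ t - γ 0 - t • v - (t ^ 2 / 2) • a with hgdef
  have hg0 : g 0 = 0 := by simp [hgdef]
  -- derivative of g near 0
  have hg' : ∀ᶠ s in nhds (0 : ℝ), HasDerivAt g (deriv γ s - v - s • a) s := by
    filter_upwards [hdiff] with s hs
    have h1 : HasDerivAt γ (deriv γ s) s := hs.hasDerivAt
    have h2 : HasDerivAt (fun t : ℝ => t • v) v s := by
      simpa using (hasDerivAt_id s).smul_const v
    have h3 : HasDerivAt (fun t : ℝ => (t ^ 2 / 2) • a) (s • a) s := by
      have h := ((hasDerivAt_pow 2 s).div_const 2).smul_const a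
      norm_num at h
      exact h
    exact ((h1.sub_const (γ 0)).sub h2).sub h3
  -- smallness of deriv g from second differentiability
  have hlo : ∀ᶠ s in nhds (0 : ℝ), ‖deriv γ s - v - s • a‖ ≤ ε * |s| := by
    have := (hasDerivAt_iff_isLittleO.mp hsecond).def hε
    filter_upwards [this] with s hs
    simpa [Real.norm_eq_abs] using hs
  -- pick δ₁ from the eventual statements
  obtain ⟨δ₁, hδ₁, hball⟩ := Metric.eventually_nhds_iff.mp (hg'.and hlo)
  set C := ‖a‖ / 2 + ε with hCdef
  have hC : 0 < C := by positivity
  clear_value C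
  refine ⟨min δ₁ (min (1 / C) (d / (4 * C))), by positivity, ?_⟩
  rintro t ⟨ht0, htδ⟩
  have htδ₁ : t < δ₁ := lt_of_lt_of_le htδ (min_le_left _ _)
  have htC1 : t * C < 1 := by
    have : t < 1 / C := lt_of_lt_of_le htδ (le_trans (min_le_right _ _) (min_le_left _ _))
    calc t * C < (1 / C) * C := by exact mul_lt_mul_of_pos_right this hC
    _ = 1 := by field_simp
  have htCd : t * C < d / 4 := by
    have : t < d / (4 * C) := lt_of_lt_of_le htδ (le_trans (min_le_right _ _) (min_le_right _ _))
    calc t * C < (d / (4 * C)) * C := mul_lt_mul_of_pos_right this hC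
    _ = d / 4 := by field_simp
  -- MVT bound on g
  have hgb : ‖g t‖ ≤ ε * t ^ 2 := by
    have key : ∀ s ∈ Set.Icc (0 : ℝ) t, HasDerivWithinAt g (deriv γ s - v - s • a)
        (Set.Icc (0 : ℝ) t) s := by
      intro s hs
      have : dist s 0 < δ₁ := by
        rw [Real.dist_eq, sub_zero, abs_of_nonneg hs.1]
        exact lt_of_le_of_lt hs.2 htδ₁
      exact ((hball this).1).hasDerivWithinAt
    have bound : ∀ s ∈ Set.Icc (0 : ℝ) t, ‖deriv γ s - v - s • a‖ ≤ ε * t := by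
      intro s hs
      have hdist : dist s 0 < δ₁ := by
        rw [Real.dist_eq, sub_zero, abs_of_nonneg hs.1]
        exact lt_of_le_of_lt hs.2 htδ₁
      refine le_trans (hball hdist).2 ?_
      rw [abs_of_nonneg hs.1]
      exact mul_le_mul_of_nonneg_left hs.2 hε.le
    have := (convex_Icc (0 : ℝ) t).norm_image_sub_le_of_norm_hasDerivWithin_le key bound
      (Set.left_mem_Icc.mpr ht0.le) (Set.right_mem_Icc.mpr ht0.le)
    rw [hg0, sub_zero, sub_zero, Real.norm_eq_abs, abs_of_pos ht0] at this
    calc ‖g t‖ ≤ ε * t * t := this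
    _ = ε * t ^ 2 := by ring
  -- now the geometric estimate
  rw [Metric.mem_ball, dist_eq_norm]
  set w : EuclideanSpace ℝ (Fin n) := γ t - γ 0 with hwdef
  have hsplit : γ t - (γ 0 + (R * ‖a‖⁻¹) • a) = w - (R * ‖a‖⁻¹) • a := by
    rw [hwdef]; abel
  rw [hsplit]
  have hwg : w = t • v + (t ^ 2 / 2) • a + g t := by rw [hgdef, hwdef]; beta_reduce; abel
  -- inner product expansion
  have hinner : ⟪w, a⟫ = (t ^ 2 / 2) * ‖a‖ ^ 2 + ⟪g t, a⟫ := by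
    rw [hwg, inner_add_left, inner_add_left, real_inner_smul_left, real_inner_smul_left,
      horth, real_inner_self_eq_norm_sq]
    ring
  have hginner : |⟪g t, a⟫| ≤ ε * t ^ 2 * ‖a‖ := by
    calc |⟪g t, a⟫| ≤ ‖g t‖ * ‖a‖ := abs_real_inner_le_norm _ _
    _ ≤ ε * t ^ 2 * ‖a‖ := mul_le_mul_of_nonneg_right hgb hna.le
  have hwnorm : ‖w‖ ≤ t * (1 + t * C) := by
    calc ‖w‖ ≤ ‖t • v‖ + ‖(t ^ 2 / 2) • a‖ + ‖g t‖ := by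
          rw [hwg]; exact le_trans (norm_add_le _ _) (by gcongr; exact norm_add_le _ _)
    _ ≤ |t| * ‖v‖ + |t ^ 2 / 2| * ‖a‖ + ε * t ^ 2 := by
          rw [norm_smul, norm_smul]; gcongr <;> simp [Real.norm_eq_abs, le_abs_self]
    _ = t * (1 + t * C) := by
          rw [hv, abs_of_pos ht0, abs_of_pos (by positivity : (0:ℝ) < t ^ 2 / 2), hCdef]
          ring
  -- expand the squared norm
  have hsq : ‖w - (R * ‖a‖⁻¹) • a‖ ^ 2 = ‖w‖ ^ 2 - 2 * (R * ‖a‖⁻¹) * ⟪w, a⟫ + R ^ 2 := by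
    rw [norm_sub_sq_real, real_inner_smul_right, norm_smul]
    have : ‖R * ‖a‖⁻¹‖ = R * ‖a‖⁻¹ := by
      rw [Real.norm_eq_abs, abs_of_pos (by positivity)]
    rw [this]
    have hinv : ‖a‖⁻¹ * ‖a‖ = 1 := inv_mul_cancel₀ hna.ne'
    field_simp
  have hfinal : ‖w - (R * ‖a‖⁻¹) • a‖ ^ 2 < R ^ 2 := by
    rw [hsq]
    have hw2 : ‖w‖ ^ 2 ≤ (t * (1 + t * C)) ^ 2 := by
      have h1 : 0 ≤ ‖w‖ := norm_nonneg _
      nlinarith [hwnorm]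
    have hRa : R * ‖a‖⁻¹ * ‖a‖ = R := by field_simp
    have hip : (t ^ 2 / 2) * ‖a‖ ^ 2 - ε * t ^ 2 * ‖a‖ ≤ ⟪w, a⟫ := by
      rw [hinner]
      have := neg_abs_le ⟪g t, a⟫
      linarith [hginner]
    have hr0 : 0 < R * ‖a‖⁻¹ := by positivity
    have key : ‖w‖ ^ 2 - 2 * (R * ‖a‖⁻¹) * ⟪w, a⟫ ≤
        (t * (1 + t * C)) ^ 2 - 2 * (R * ‖a‖⁻¹) * ((t ^ 2 / 2) * ‖a‖ ^ 2 - ε * t ^ 2 * ‖a‖) := by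
      have := mul_le_mul_of_nonneg_left hip (by positivity : (0:ℝ) ≤ 2 * (R * ‖a‖⁻¹))
      linarith
    have hexp : 2 * (R * ‖a‖⁻¹) * ((t ^ 2 / 2) * ‖a‖ ^ 2 - ε * t ^ 2 * ‖a‖)
        = t ^ 2 * (R * ‖a‖ - 2 * R * ε) := by
      have hinv : ‖a‖⁻¹ * ‖a‖ = 1 := inv_mul_cancel₀ hna.ne'
      field_simp
    rw [hexp] at key
    have hεval : 2 * R * ε = d / 4 := by
      rw [hεdef]; field_simp; ring
    have hnum : (t * (1 + t * C)) ^ 2 - t ^ 2 * (R * ‖a‖ - 2 * R * ε) < 0 := by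
      have h1 : R * ‖a‖ - 2 * R * ε = 1 + 3 * d / 4 := by
        rw [hεval, hddef]; ring
      rw [h1]
      have ht2 : 0 < t ^ 2 := by positivity
      have hx : 0 < t * C := mul_pos ht0 hC
      have hx2 : (t * C) ^ 2 < t * C := by nlinarith
      have hsqlt : (1 + t * C) ^ 2 < 1 + 3 * d / 4 := by nlinarith
      nlinarith
    linarith
  have hnn : 0 ≤ ‖w - (R * ‖a‖⁻¹) • a‖ := norm_nonneg _
  nlinarith [hfinal]
end
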